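/- Let p be a homogeneous polynomial of degree 2d in 4 variables and suppose vectors v_1, ..., v_8 ∈ ℝ⁴ and signs α_2, ..., α_8 ∈ {−1, 1} satisfy v_1 v_1ᵀ = ∑_{i=2}^{8} α_i v_i v_iᵀ. If the associated biform Q_p satisfies |Q_p(x, y)| ≤ sqrt(p(x) p(y)) for all x, y ∈ ℝ⁴ (with p nonnegative), then p(v_1) ≤ (∑_{i=2}^{8} sqrt(p(v_i)))². -/
import Mathlib


open MvPolynomial Finset Matrix

theorem stmt_17 (p : MvPolynomial (Fin 4) ℝ) (hp : p.IsHomogeneous 4)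
    (hnonneg : ∀ x : Fin 4 → ℝ, 0 ≤ eval x p)
    (L : Matrix (Fin 4) (Fin 4) ℝ →ₗ[ℝ] Matrix (Fin 4) (Fin 4) ℝ →ₗ[ℝ] ℝ)
    (hsym : ∀ M N, L M N = L N M)
    (hdiag : ∀ x : Fin 4 → ℝ, L (vecMulVec x x) (vecMulVec x x) = eval x p)
    (hCS : ∀ x y : Fin 4 → ℝ,
      |L (vecMulVec x x) (vecMulVec y y)| ≤ Real.sqrt (eval x p * eval y p))
    (v : Fin 8 → (Fin 4 → ℝ)) (α : Fin 8 → ℝ)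
    (hα : ∀ i, α i = 1 ∨ α i = -1)
    (hrel : vecMulVec (v 0) (v 0) =
      ∑ i ∈ Finset.univ.erase (0 : Fin 8), α i • vecMulVec (v i) (v i)) :
    eval (v 0) p ≤
      (∑ i ∈ Finset.univ.erase (0 : Fin 8), Real.sqrt (eval (v i) p)) ^ 2 := by
  set s := Finset.univ.erase (0 : Fin 8) with hs
  have h1 : eval (v 0) p =
      ∑ i ∈ s, ∑ j ∈ s, α i * α j * L (vecMulVec (v i) (v i)) (vecMulVec (v j) (v j)) := by
    rw [← hdiag (v 0), hrel]
    simp only [map_sum, LinearMap.sum_apply, _root_.map_smul, LinearMap.smul_apply, smul_eq_mul,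
      Finset.mul_sum]
    rw [Finset.sum_comm]
    refine Finset.sum_congr rfl fun i _ => Finset.sum_congr rfl fun j _ => ?_
    ring
  have habs : ∀ i, |α i| = 1 := by
    intro i; rcases hα i with h | h <;> simp [h]
  rw [h1, sq, Finset.sum_mul_sum]
  refine Finset.sum_le_sum fun i _ => Finset.sum_le_sum fun j _ => ?_
  calc α i * α j * L (vecMulVec (v i) (v i)) (vecMulVec (v j) (v j))
      ≤ |α i * α j * L (vecMulVec (v i) (v i)) (vecMulVec (v j) (v j))| := le_abs_self _
    _ = |L (vecMulVec (v i) (v i)) (vecMulVec (v j) (v j))| := by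
        rw [abs_mul, abs_mul, habs i, habs j]; ring
    _ ≤ Real.sqrt (eval (v i) p * eval (v j) p) := hCS _ _
    _ = Real.sqrt (eval (v i) p) * Real.sqrt (eval (v j) p) :=
        Real.sqrt_mul (hnonneg _) _
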